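/- Let n and i be natural numbers with i ≥ 2 and n ≥ i + 3. Then the number of isolate dominating sets of the path P_n of cardinality i satisfies d_0(P_n, i) = d(P_{n−2}, i−1) + d(P_{n−3}, i−1) + Σ_{k=3}^{i} d_0(P_{n−k}, i−k+1) + Σ_{k=4}^{i+1} d_0(P_{n−k}, i−k+2). -/

import Mathlib

open Finset

/-- `S` is a dominating set of `G`: every vertex not in `S` is adjacent to a vertex of `S`. -/
def IsDominatingSet {V : Type*} (G : SimpleGraph V) (S : Finset V) : Prop :=
  ∀ v : V, v ∉ S → ∃ u ∈ S, G.Adj u v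

/-- `S` is an isolate dominating set of `G`: a dominating set whose induced
subgraph has an isolated vertex. -/
def IsIsolateDominatingSet {V : Type*} (G : SimpleGraph V) (S : Finset V) : Prop :=
  IsDominatingSet G S ∧ ∃ v ∈ S, ∀ u ∈ S, ¬ G.Adj v u

/-- `d(G, i)`: the number of dominating sets of `G` of cardinality `i`. -/
noncomputable def domCount {V : Type*} [Fintype V] (G : SimpleGraph V) (i : ℕ) : ℕ :=
  Set.ncard {S : Finset V | IsDominatingSet G S ∧ S.card = i}

/-- `d₀(G, i)`: the number of isolate dominating sets of `G` of cardinality `i`. -/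
noncomputable def isoDomCount {V : Type*} [Fintype V] (G : SimpleGraph V) (i : ℕ) : ℕ :=
  Set.ncard {S : Finset V | IsIsolateDominatingSet G S ∧ S.card = i}

/-- `γ₀(G)`: the isolate domination number, the minimum cardinality of an
isolate dominating set of `G`. -/
noncomputable def isoDomNumber {V : Type*} [Fintype V] (G : SimpleGraph V) : ℕ :=
  sInf {k : ℕ | ∃ S : Finset V, IsIsolateDominatingSet G S ∧ S.card = k}


def domN (n : ℕ) (S : Finset ℕ) : Prop :=
  ∀ v < n, v ∉ S → v + 1 ∈ S ∨ (0 < v ∧ v - 1 ∈ S)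

def isoN (n : ℕ) (S : Finset ℕ) : Prop :=
  domN n S ∧ ∃ v ∈ S, v + 1 ∉ S ∧ (v = 0 ∨ v - 1 ∉ S)

def glue (c : ℕ) (Q T : Finset ℕ) : Finset ℕ := Q ∪ T.image (· + c)

def cut (c : ℕ) (S : Finset ℕ) : Finset ℕ := (S.filter (c ≤ ·)).image (· - c)

lemma mem_glue {c x : ℕ} {Q T : Finset ℕ} :
    x ∈ glue c Q T ↔ x ∈ Q ∨ (c ≤ x ∧ x - c ∈ T) := by
  unfold glue
  simp only [mem_union, mem_image]
  constructor
  · rintro (h | ⟨t, ht, rfl⟩)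
    · exact Or.inl h
    · exact Or.inr ⟨Nat.le_add_left _ _, by simpa using ht⟩
  · rintro (h | ⟨hle, ht⟩)
    · exact Or.inl h
    · exact Or.inr ⟨x - c, ht, by omega⟩

lemma mem_cut {c x : ℕ} {S : Finset ℕ} : x ∈ cut c S ↔ x + c ∈ S := by
  unfold cut
  simp only [mem_image, mem_filter]
  constructor
  · rintro ⟨y, ⟨hy, hle⟩, rfl⟩
    rwa [show y - c + c = y by omega]
  · intro h
    exact ⟨x + c, ⟨h, by omega⟩, by omega⟩

section core
variable {n i c : ℕ} {Q T S : Finset ℕ}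

variable (hc : 2 ≤ c) (hcn : c ≤ n)
  (hQr : ∀ q ∈ Q, q < c - 1) (hQ2 : c - 2 ∈ Q)
  (hQdom : ∀ v < c - 1, v ∉ Q → v + 1 ∈ Q ∨ (0 < v ∧ v - 1 ∈ Q))

include hc hQr in
lemma glue_inter : glue c Q T ∩ range c = Q := by
  ext x
  simp only [mem_inter, mem_glue, mem_range]
  constructor
  · rintro ⟨h | ⟨h1, h2⟩, hx⟩
    · exact h
    · omega
  · intro h
    exact ⟨Or.inl h, by have := hQr x h; omega⟩

include hQr in
lemma glue_subset_range (hT : T ⊆ range (n - c)) (hcn : c ≤ n) : glue c Q T ⊆ range n := by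
  intro x hx
  rw [mem_glue] at hx
  rw [mem_range]
  rcases hx with h | ⟨h1, h2⟩
  · have := hQr x h; omega
  · have := hT h2; rw [mem_range] at this; omega

include hQr in
lemma glue_card : (glue c Q T).card = Q.card + T.card := by
  unfold glue
  rw [card_union_of_disjoint, Finset.card_image_of_injective _ (add_left_injective c)]
  rw [disjoint_left]
  intro x hx hx2
  simp only [mem_image] at hx2
  obtain ⟨t, _, rfl⟩ := hx2
  have := hQr _ hx
  omega

include hQr in
lemma cut_glue : cut c (glue c Q T) = T := by
  ext x
  rw [mem_cut, mem_glue]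
  constructor
  · rintro (h | ⟨h1, h2⟩)
    · exact absurd (hQr _ h) (by omega)
    · simpa using h2
  · intro h
    exact Or.inr ⟨by omega, by simpa using h⟩

lemma glue_cut (hS : S ∩ range c = Q) : glue c Q (cut c S) = S := by
  ext x
  rw [mem_glue, mem_cut]
  constructor
  · rintro (h | ⟨h1, h2⟩)
    · exact (mem_inter.1 (hS ▸ h)).1
    · rwa [show x - c + c = x by omega] at h2
  · intro h
    rcases Nat.lt_or_ge x c with hx | hx
    · exact Or.inl (hS ▸ mem_inter.2 ⟨h, mem_range.2 hx⟩)
    · exact Or.inr ⟨hx, by rwa [show x - c + c = x by omega]⟩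

lemma cut_subset_range (hS : S ⊆ range n) : cut c S ⊆ range (n - c) := by
  intro x hx
  rw [mem_cut] at hx
  have := hS hx
  rw [mem_range] at this ⊢
  omega

include hc hcn hQr hQ2 hQdom in
lemma glue_dom_iff : domN n (glue c Q T) ↔ domN (n - c) T := by
  constructor
  · intro h v hv hvT
    have h1 : v + c < n := by omega
    have h2 : v + c ∉ glue c Q T := by
      rw [mem_glue]
      push_neg
      refine ⟨fun hq => absurd (hQr _ hq) (by omega), fun _ => by simpa using hvT⟩
    rcases h (v + c) h1 h2 with h3 | ⟨h3, h4⟩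
    · rw [mem_glue] at h3
      rcases h3 with h3 | ⟨_, h3⟩
      · exact absurd (hQr _ h3) (by omega)
      · exact Or.inl (by rwa [show v + c + 1 - c = v + 1 by omega] at h3)
    · rw [mem_glue] at h4
      rcases h4 with h4 | ⟨h5, h4⟩
      · have := hQr _ h4
        have hv0 : v = 0 := by omega
        subst hv0
        have : c - 1 < c - 1 := by have := hQr _ h4; omega
        omega
      · have hv0 : 0 < v := by omega
        exact Or.inr ⟨hv0, by rwa [show v + c - 1 - c = v - 1 by omega] at h4⟩
  · intro h v hv hvS
    rcases Nat.lt_or_ge v (c - 1) with hvc | hvc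
    · have hvQ : v ∉ Q := fun hq => hvS (mem_glue.2 (Or.inl hq))
      rcases hQdom v hvc hvQ with h1 | ⟨h1, h2⟩
      · exact Or.inl (mem_glue.2 (Or.inl h1))
      · exact Or.inr ⟨h1, mem_glue.2 (Or.inl h2)⟩
    rcases Nat.lt_or_ge v c with hvc2 | hvc2
    · have hv1 : v = c - 1 := by omega
      refine Or.inr ⟨by omega, mem_glue.2 (Or.inl ?_)⟩
      rw [hv1, show c - 1 - 1 = c - 2 by omega]
      exact hQ2
    · have hvT : v - c ∉ T := fun ht => hvS (mem_glue.2 (Or.inr ⟨hvc2, ht⟩))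
      rcases h (v - c) (by omega) hvT with h1 | ⟨h1, h2⟩
      · exact Or.inl (mem_glue.2 (Or.inr ⟨by omega, by rwa [show v + 1 - c = v - c + 1 by omega]⟩))
      · exact Or.inr ⟨by omega, mem_glue.2 (Or.inr ⟨by omega, by rwa [show v - 1 - c = v - c - 1 by omega]⟩)⟩

include hc hQr in
lemma glue_iso_iff (hQiso : ∀ q ∈ Q, q + 1 ∈ Q ∨ (0 < q ∧ q - 1 ∈ Q)) :
    (∃ v ∈ glue c Q T, v + 1 ∉ glue c Q T ∧ (v = 0 ∨ v - 1 ∉ glue c Q T))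
      ↔ ∃ v ∈ T, v + 1 ∉ T ∧ (v = 0 ∨ v - 1 ∉ T) := by
  constructor
  · rintro ⟨v, hv, h1, h2⟩
    rw [mem_glue] at hv
    rcases hv with hv | ⟨hv1, hv2⟩
    · rcases hQiso v hv with hq | ⟨hq1, hq2⟩
      · exact absurd (mem_glue.2 (Or.inl hq)) h1
      · rcases h2 with h2 | h2
        · omega
        · exact absurd (mem_glue.2 (Or.inl hq2)) h2
    · refine ⟨v - c, hv2, ?_, ?_⟩
      · intro ht
        exact h1 (mem_glue.2 (Or.inr ⟨by omega, by rwa [show v + 1 - c = v - c + 1 by omega]⟩))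
      · rcases Nat.eq_zero_or_pos (v - c) with h0 | h0
        · exact Or.inl h0
        · refine Or.inr fun ht => ?_
          rcases h2 with h2 | h2
          · omega
          · exact h2 (mem_glue.2 (Or.inr ⟨by omega, by rwa [show v - 1 - c = v - c - 1 by omega]⟩))
  · rintro ⟨v, hv, h1, h2⟩
    refine ⟨v + c, mem_glue.2 (Or.inr ⟨by omega, by simpa using hv⟩), ?_, ?_⟩
    · intro hc2
      rw [mem_glue] at hc2
      rcases hc2 with hq | ⟨_, hq⟩
      · exact absurd (hQr _ hq) (by omega)
      · exact h1 (by rwa [show v + c + 1 - c = v + 1 by omega] at hq)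
    · refine Or.inr fun hc2 => ?_
      rw [mem_glue] at hc2
      rcases hc2 with hq | ⟨hq1, hq⟩
      · have := hQr _ hq; omega
      · rcases h2 with h2 | h2
        · omega
        · exact h2 (by rwa [show v + c - 1 - c = v - 1 by omega] at hq)

include hc hQr in
lemma glue_iso_auto (hQiso : ∃ q ∈ Q, q + 1 ∉ Q ∧ (q = 0 ∨ q - 1 ∉ Q)) :
    ∃ v ∈ glue c Q T, v + 1 ∉ glue c Q T ∧ (v = 0 ∨ v - 1 ∉ glue c Q T) := by
  obtain ⟨q, hq, h1, h2⟩ := hQiso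
  have hqlt := hQr _ hq
  refine ⟨q, mem_glue.2 (Or.inl hq), ?_, ?_⟩
  · intro hcq
    rw [mem_glue] at hcq
    rcases hcq with hcq | ⟨hcq, _⟩
    · exact h1 hcq
    · omega
  · rcases h2 with h2 | h2
    · exact Or.inl h2
    · refine Or.inr fun hcq => ?_
      rw [mem_glue] at hcq
      rcases hcq with hcq | ⟨hcq, _⟩
      · exact h2 hcq
      · omega

end core

open scoped Classical in
noncomputable def DN (n i : ℕ) : ℕ :=
  ((range n).powerset.filter (fun S => domN n S ∧ S.card = i)).card

open scoped Classical in
noncomputable def NN (n i : ℕ) : ℕ :=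
  ((range n).powerset.filter (fun S => isoN n S ∧ S.card = i)).card

open scoped Classical in
lemma fiber_card_iso (n i c : ℕ) (Q : Finset ℕ) (hc : 2 ≤ c) (hcn : c ≤ n)
    (hQr : ∀ q ∈ Q, q < c - 1) (hQ2 : c - 2 ∈ Q)
    (hQdom : ∀ v < c - 1, v ∉ Q → v + 1 ∈ Q ∨ (0 < v ∧ v - 1 ∈ Q))
    (hQiso : ∀ q ∈ Q, q + 1 ∈ Q ∨ (0 < q ∧ q - 1 ∈ Q))
    (hQi : Q.card ≤ i) :
    ((range n).powerset.filter
        (fun S => isoN n S ∧ S.card = i ∧ S ∩ range c = Q)).card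
      = NN (n - c) (i - Q.card) := by
  unfold NN
  apply Finset.card_bij' (fun S _ => cut c S) (fun T _ => glue c Q T)
  · intro S hS
    simp only [mem_filter, mem_powerset] at hS ⊢
    obtain ⟨hsub, ⟨hdom, hwit⟩, hcard, hint⟩ := hS
    have hg : glue c Q (cut c S) = S := glue_cut hint
    refine ⟨cut_subset_range hsub, ⟨?_, ?_⟩, ?_⟩
    · exact (glue_dom_iff hc hcn hQr hQ2 hQdom).1 (by rwa [hg])
    · exact (glue_iso_iff hc hQr hQiso).1 (by rwa [hg])
    · have := glue_card (T := cut c S) hQr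
      rw [hg, hcard] at this
      omega
  · intro T hT
    simp only [mem_filter, mem_powerset] at hT ⊢
    obtain ⟨hsub, ⟨hdom, hwit⟩, hcard⟩ := hT
    refine ⟨glue_subset_range hQr hsub hcn, ⟨?_, ?_⟩, ?_, ?_⟩
    · exact (glue_dom_iff hc hcn hQr hQ2 hQdom).2 hdom
    · exact (glue_iso_iff hc hQr hQiso).2 hwit
    · rw [glue_card hQr, hcard]; omega
    · exact glue_inter hc hQr
  · intro S hS
    simp only [mem_filter] at hS
    exact glue_cut hS.2.2.2
  · intro T hT
    exact cut_glue hQr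

open scoped Classical in
lemma fiber_card_dom (n i c : ℕ) (Q : Finset ℕ) (hc : 2 ≤ c) (hcn : c ≤ n)
    (hQr : ∀ q ∈ Q, q < c - 1) (hQ2 : c - 2 ∈ Q)
    (hQdom : ∀ v < c - 1, v ∉ Q → v + 1 ∈ Q ∨ (0 < v ∧ v - 1 ∈ Q))
    (hQiso : ∃ q ∈ Q, q + 1 ∉ Q ∧ (q = 0 ∨ q - 1 ∉ Q))
    (hQi : Q.card ≤ i) :
    ((range n).powerset.filter
        (fun S => isoN n S ∧ S.card = i ∧ S ∩ range c = Q)).card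
      = DN (n - c) (i - Q.card) := by
  unfold DN
  apply Finset.card_bij' (fun S _ => cut c S) (fun T _ => glue c Q T)
  · intro S hS
    simp only [mem_filter, mem_powerset] at hS ⊢
    obtain ⟨hsub, ⟨hdom, hwit⟩, hcard, hint⟩ := hS
    have hg : glue c Q (cut c S) = S := glue_cut hint
    refine ⟨cut_subset_range hsub, ?_, ?_⟩
    · exact (glue_dom_iff hc hcn hQr hQ2 hQdom).1 (by rwa [hg])
    · have := glue_card (T := cut c S) hQr
      rw [hg, hcard] at this
      omega
  · intro T hT
    simp only [mem_filter, mem_powerset] at hT ⊢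
    obtain ⟨hsub, hdom, hcard⟩ := hT
    refine ⟨glue_subset_range hQr hsub hcn, ⟨?_, ?_⟩, ?_, ?_⟩
    · exact (glue_dom_iff hc hcn hQr hQ2 hQdom).2 hdom
    · exact glue_iso_auto hc hQr hQiso
    · rw [glue_card hQr, hcard]; omega
    · exact glue_inter hc hQr
  · intro S hS
    simp only [mem_filter] at hS
    exact glue_cut hS.2.2.2
  · intro T hT
    exact cut_glue hQr

lemma exists_add_not_mem (a : ℕ) (S : Finset ℕ) : ∃ j, a + j ∉ S :=
  ⟨S.sup id + 1, fun h => by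
    have := Finset.le_sup (f := id) h
    simp only [id] at this
    omega⟩

/-- length of the initial block of `S` starting at `0` or `1`. -/
def firstGap (S : Finset ℕ) : ℕ :=
  Nat.find (exists_add_not_mem (if 0 ∈ S then 0 else 1) S)

lemma inter_eq_range_iff (S : Finset ℕ) (m : ℕ) (hm : 1 ≤ m) :
    (firstGap S = m ∧ 0 ∈ S) ↔ S ∩ range (m + 1) = range m := by
  constructor
  · rintro ⟨hg, h0⟩
    unfold firstGap at hg
    rw [Nat.find_eq_iff] at hg
    simp only [if_pos h0, Nat.zero_add, not_not] at hg
    ext x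
    simp only [mem_inter, mem_range]
    constructor
    · rintro ⟨hx, hx2⟩
      rcases Nat.lt_or_ge x m with h | h
      · exact h
      · exact absurd ((show x = m by omega) ▸ hx) hg.1
    · intro hx
      exact ⟨hg.2 x hx, by omega⟩
  · intro h
    have hmem : ∀ x, x ∈ S ∩ range (m + 1) ↔ x ∈ range m := fun x => by rw [h]
    have h0 : 0 ∈ S := by
      have := (hmem 0).2 (mem_range.2 (by omega))
      exact (mem_inter.1 this).1
    refine ⟨?_, h0⟩
    unfold firstGap
    rw [Nat.find_eq_iff]
    simp only [if_pos h0, Nat.zero_add, not_not]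
    constructor
    · intro hc
      have := (hmem m).1 (mem_inter.2 ⟨hc, mem_range.2 (by omega)⟩)
      rw [mem_range] at this
      omega
    · intro k hk
      have := (hmem k).2 (mem_range.2 hk)
      exact (mem_inter.1 this).1

lemma inter_eq_ico_iff (S : Finset ℕ) (m : ℕ) (hm : 1 ≤ m) :
    (firstGap S = m ∧ 0 ∉ S) ↔ S ∩ range (m + 2) = Ico 1 (m + 1) := by
  constructor
  · rintro ⟨hg, h0⟩
    unfold firstGap at hg
    rw [Nat.find_eq_iff] at hg
    simp only [if_neg h0, not_not] at hg
    ext x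
    simp only [mem_inter, mem_range, mem_Ico]
    constructor
    · rintro ⟨hx, hx2⟩
      have hx0 : 1 ≤ x := by
        rcases Nat.eq_zero_or_pos x with h | h
        · exact absurd hx (h ▸ h0)
        · exact h
      refine ⟨hx0, ?_⟩
      rcases Nat.lt_or_ge x (m + 1) with h | h
      · exact h
      · exact absurd ((show x = 1 + m by omega) ▸ hx) hg.1
    · rintro ⟨hx1, hx2⟩
      have := hg.2 (x - 1) (by omega)
      rw [show 1 + (x - 1) = x by omega] at this
      exact ⟨this, by omega⟩
  · intro h
    have hmem : ∀ x, x ∈ S ∩ range (m + 2) ↔ x ∈ Ico 1 (m + 1) := fun x => by rw [h]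
    have h0 : 0 ∉ S := by
      intro hc
      have := (hmem 0).1 (mem_inter.2 ⟨hc, mem_range.2 (by omega)⟩)
      rw [mem_Ico] at this
      omega
    refine ⟨?_, h0⟩
    unfold firstGap
    rw [Nat.find_eq_iff]
    simp only [if_neg h0, not_not]
    constructor
    · intro hc
      have := (hmem (1 + m)).1 (mem_inter.2 ⟨hc, mem_range.2 (by omega)⟩)
      rw [mem_Ico] at this
      omega
    · intro k hk
      have := (hmem (1 + k)).2 (mem_Ico.2 (by omega))
      exact (mem_inter.1 this).1

lemma firstGap_bounds {n i : ℕ} {S : Finset ℕ} (hdom : domN n S) (hsub : S ⊆ range n)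
    (hcard : S.card = i) (hi : 2 ≤ i) (hn : i + 3 ≤ n) :
    1 ≤ firstGap S ∧ firstGap S ≤ i - 1 := by
  set a := if 0 ∈ S then 0 else 1 with ha
  have haS : a ∈ S := by
    by_cases h0 : 0 ∈ S
    · rwa [ha, if_pos h0]
    · rw [ha, if_neg h0]
      rcases hdom 0 (by omega) h0 with h | ⟨h, _⟩
      · exact h
      · omega
  have ha1 : a ≤ 1 := by rw [ha]; split <;> omega
  have h1 : 1 ≤ firstGap S := by
    rcases Nat.eq_zero_or_pos (firstGap S) with h | h
    · have := Nat.find_spec (exists_add_not_mem a S)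
      unfold firstGap at h
      rw [h] at this
      exact absurd (by simpa using haS) (by simpa using this)
    · exact h
  refine ⟨h1, ?_⟩
  by_contra hc
  push_neg at hc
  have hgei : i ≤ firstGap S := by omega
  have hico : Ico a (a + i) ⊆ S := by
    intro x hx
    rw [mem_Ico] at hx
    have := Nat.find_min (exists_add_not_mem a S) (m := x - a) (by unfold firstGap at hgei; omega)
    rw [not_not, show a + (x - a) = x by omega] at this
    exact this
  have hSeq : S = Ico a (a + i) := by
    exact (Finset.eq_of_subset_of_card_le hico (by rw [hcard, Nat.card_Ico]; omega)).symm
  have hv : a + i + 1 < n := by omega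
  have hvS : a + i + 1 ∉ S := by
    rw [hSeq, mem_Ico]; omega
  rcases hdom (a + i + 1) hv hvS with h | ⟨_, h⟩ <;>
    · rw [hSeq, mem_Ico] at h; omega

open scoped Classical in
lemma NN_rec (n i : ℕ) (hi : 2 ≤ i) (hn : i + 3 ≤ n) :
    NN n i = DN (n - 2) (i - 1) + DN (n - 3) (i - 1)
      + (∑ k ∈ Icc 3 i, NN (n - k) (i + 1 - k))
      + (∑ k ∈ Icc 4 (i + 1), NN (n - k) (i + 2 - k)) := by
  have hmemA : ∀ S ∈ (range n).powerset.filter (fun S => isoN n S ∧ S.card = i),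
      S ⊆ range n ∧ isoN n S ∧ S.card = i := by
    intro S hS
    simpa [mem_filter, mem_powerset, and_assoc] using hS
  have hf : ∀ S ∈ (range n).powerset.filter (fun S => isoN n S ∧ S.card = i),
      (firstGap S, decide (0 ∈ S)) ∈ Icc 1 (i - 1) ×ˢ (univ : Finset Bool) := by
    intro S hS
    obtain ⟨hsub, ⟨hdom, _⟩, hcard⟩ := hmemA S hS
    have hb := firstGap_bounds hdom hsub hcard hi hn
    simp only [mem_product, mem_Icc, mem_univ, and_true]
    exact ⟨hb.1, hb.2⟩
  have hsplit := Finset.card_eq_sum_card_fiberwise hf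
  -- fiber evaluations
  have fibT : ∀ m, 1 ≤ m → m ≤ i - 1 →
      (((range n).powerset.filter (fun S => isoN n S ∧ S.card = i)).filter
          (fun S => (firstGap S, decide (0 ∈ S)) = (m, true))).card
        = if m = 1 then DN (n - 2) (i - 1) else NN (n - (m + 1)) (i - m) := by
    intro m hm1 hm2
    have hfe : ((range n).powerset.filter (fun S => isoN n S ∧ S.card = i)).filter
          (fun S => (firstGap S, decide (0 ∈ S)) = (m, true))
        = (range n).powerset.filter
            (fun S => isoN n S ∧ S.card = i ∧ S ∩ range (m + 1) = range m) := by
      rw [filter_filter]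
      apply filter_congr
      intro S _
      simp only [Prod.mk.injEq, decide_eq_true_eq]
      constructor
      · rintro ⟨⟨hiso, hcard⟩, hg, h0⟩
        exact ⟨hiso, hcard, (inter_eq_range_iff S m hm1).1 ⟨hg, h0⟩⟩
      · rintro ⟨hiso, hcard, hint⟩
        obtain ⟨hg, h0⟩ := (inter_eq_range_iff S m hm1).2 hint
        exact ⟨⟨hiso, hcard⟩, hg, h0⟩
    rw [hfe]
    rcases eq_or_lt_of_le hm1 with h1 | h1
    · rw [if_pos h1.symm, ← h1]
      have := fiber_card_dom n i 2 (range 1) (by omega) (by omega)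
        (fun q hq => by rw [mem_range] at hq; omega) (by simp)
        (fun v hv hq => absurd (mem_range.2 (by omega)) hq)
        ⟨0, by simp, by simp, Or.inl rfl⟩ (by simp; omega)
      simpa using this
    · rw [if_neg (by omega)]
      have := fiber_card_iso n i (m + 1) (range m) (by omega) (by omega)
        (fun q hq => by rw [mem_range] at hq; omega)
        (by rw [mem_range]; omega)
        (fun v hv hq => absurd (mem_range.2 (by omega)) hq)
        (fun q hq => by
          rw [mem_range] at hq
          rcases Nat.lt_or_ge (q + 1) m with h | h
          · exact Or.inl (mem_range.2 h)
          · exact Or.inr ⟨by omega, mem_range.2 (by omega)⟩)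
        (by rw [card_range]; omega)
      rwa [card_range] at this
  have fibF : ∀ m, 1 ≤ m → m ≤ i - 1 →
      (((range n).powerset.filter (fun S => isoN n S ∧ S.card = i)).filter
          (fun S => (firstGap S, decide (0 ∈ S)) = (m, false))).card
        = if m = 1 then DN (n - 3) (i - 1) else NN (n - (m + 2)) (i - m) := by
    intro m hm1 hm2
    have hfe : ((range n).powerset.filter (fun S => isoN n S ∧ S.card = i)).filter
          (fun S => (firstGap S, decide (0 ∈ S)) = (m, false))
        = (range n).powerset.filter
            (fun S => isoN n S ∧ S.card = i ∧ S ∩ range (m + 2) = Ico 1 (m + 1)) := by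
      rw [filter_filter]
      apply filter_congr
      intro S _
      simp only [Prod.mk.injEq, decide_eq_false_iff_not]
      constructor
      · rintro ⟨⟨hiso, hcard⟩, hg, h0⟩
        exact ⟨hiso, hcard, (inter_eq_ico_iff S m hm1).1 ⟨hg, h0⟩⟩
      · rintro ⟨hiso, hcard, hint⟩
        obtain ⟨hg, h0⟩ := (inter_eq_ico_iff S m hm1).2 hint
        exact ⟨⟨hiso, hcard⟩, hg, h0⟩
    rw [hfe]
    rcases eq_or_lt_of_le hm1 with h1 | h1
    · rw [if_pos h1.symm, ← h1]
      have := fiber_card_dom n i 3 (Ico 1 2) (by omega) (by omega)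
        (fun q hq => by rw [mem_Ico] at hq; omega) (by rw [mem_Ico]; omega)
        (fun v hv hq => Or.inl (mem_Ico.2 (by rw [mem_Ico] at hq; omega)))
        ⟨1, by rw [mem_Ico]; omega, by rw [mem_Ico]; omega,
          Or.inr (by rw [mem_Ico]; omega)⟩
        (by rw [Nat.card_Ico]; omega)
      rwa [Nat.card_Ico] at this
    · rw [if_neg (by omega)]
      have := fiber_card_iso n i (m + 2) (Ico 1 (m + 1)) (by omega) (by omega)
        (fun q hq => by rw [mem_Ico] at hq; omega)
        (by rw [mem_Ico]; omega)
        (fun v hv hq => Or.inl (mem_Ico.2 (by rw [mem_Ico] at hq; omega)))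
        (fun q hq => by
          rw [mem_Ico] at hq
          rcases Nat.lt_or_ge (q + 1) (m + 1) with h | h
          · exact Or.inl (mem_Ico.2 (by omega))
          · exact Or.inr ⟨by omega, mem_Ico.2 (by omega)⟩)
        (by rw [Nat.card_Ico]; omega)
      rwa [Nat.card_Ico] at this
  -- assemble
  rw [Finset.sum_product] at hsplit
  have hbool : ∀ m ∈ Icc 1 (i - 1),
      (∑ b ∈ (univ : Finset Bool),
        (((range n).powerset.filter (fun S => isoN n S ∧ S.card = i)).filter
          (fun S => (firstGap S, decide (0 ∈ S)) = (m, b))).card)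
      = (if m = 1 then DN (n - 2) (i - 1) else NN (n - (m + 1)) (i - m))
        + (if m = 1 then DN (n - 3) (i - 1) else NN (n - (m + 2)) (i - m)) := by
    intro m hm
    rw [mem_Icc] at hm
    rw [Fintype.sum_bool, fibT m hm.1 hm.2, fibF m hm.1 hm.2]
  rw [Finset.sum_congr rfl hbool] at hsplit
  rw [show Icc 1 (i - 1) = insert 1 (Icc 2 (i - 1)) from by
      ext x; simp only [mem_insert, mem_Icc]; omega,
    Finset.sum_insert (by simp [mem_Icc])] at hsplit
  simp only [if_pos rfl] at hsplit
  have hrest : ∑ m ∈ Icc 2 (i - 1),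
      ((if m = 1 then DN (n - 2) (i - 1) else NN (n - (m + 1)) (i - m))
        + (if m = 1 then DN (n - 3) (i - 1) else NN (n - (m + 2)) (i - m)))
      = (∑ m ∈ Icc 2 (i - 1), NN (n - (m + 1)) (i - m))
        + (∑ m ∈ Icc 2 (i - 1), NN (n - (m + 2)) (i - m)) := by
    rw [← Finset.sum_add_distrib]
    apply Finset.sum_congr rfl
    intro m hm
    rw [mem_Icc] at hm
    rw [if_neg (by omega), if_neg (by omega)]
  rw [hrest] at hsplit
  have e1 : ∑ k ∈ Icc 3 i, NN (n - k) (i + 1 - k)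
      = ∑ m ∈ Icc 2 (i - 1), NN (n - (m + 1)) (i - m) := by
    rw [show Icc 3 i = (Icc 2 (i - 1)).map (addRightEmbedding 1) from by
        rw [Finset.map_add_right_Icc]; congr 1 <;> omega,
      Finset.sum_map]
    apply Finset.sum_congr rfl
    intro m hm
    rw [mem_Icc] at hm
    simp only [addRightEmbedding_apply]
    congr 1 <;> omega
  have e2 : ∑ k ∈ Icc 4 (i + 1), NN (n - k) (i + 2 - k)
      = ∑ m ∈ Icc 2 (i - 1), NN (n - (m + 2)) (i - m) := by
    rw [show Icc 4 (i + 1) = (Icc 2 (i - 1)).map (addRightEmbedding 2) from by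
        rw [Finset.map_add_right_Icc]; congr 1 <;> omega,
      Finset.sum_map]
    apply Finset.sum_congr rfl
    intro m hm
    rw [mem_Icc] at hm
    simp only [addRightEmbedding_apply]
    congr 1 <;> omega
  have hNN : NN n i = ((range n).powerset.filter (fun S => isoN n S ∧ S.card = i)).card := rfl
  rw [hNN, hsplit, e1, e2]
  simp only [if_pos trivial]
  omega

section transfer
variable (n : ℕ)

lemma mem_image_val {S : Finset (Fin n)} {v : ℕ} :
    v ∈ S.image Fin.val ↔ ∃ h : v < n, (⟨v, h⟩ : Fin n) ∈ S := by
  simp only [mem_image]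
  constructor
  · rintro ⟨u, hu, rfl⟩; exact ⟨u.isLt, by simpa using hu⟩
  · rintro ⟨h, hu⟩; exact ⟨⟨v, h⟩, hu, rfl⟩

lemma dom_iff (S : Finset (Fin n)) :
    IsDominatingSet (SimpleGraph.pathGraph n) S ↔ domN n (S.image Fin.val) := by
  constructor
  · intro h v hv hvS
    have : (⟨v, hv⟩ : Fin n) ∉ S := fun hc => hvS (mem_image_val n |>.2 ⟨hv, hc⟩)
    obtain ⟨u, huS, hadj⟩ := h _ this
    rw [SimpleGraph.pathGraph_adj] at hadj
    have hval : ((⟨v, hv⟩ : Fin n) : ℕ) = v := rfl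
    rw [hval] at hadj
    rcases hadj with h1 | h1
    · exact Or.inr ⟨by omega, mem_image.2 ⟨u, huS, by omega⟩⟩
    · exact Or.inl (mem_image.2 ⟨u, huS, by omega⟩)
  · intro h v hvS
    have hv : (v : ℕ) ∉ S.image Fin.val := by
      intro hc
      obtain ⟨_, hc⟩ := (mem_image_val n).1 hc
      simpa using hvS.elim (by simpa using hc)
    rcases h v v.isLt hv with h1 | ⟨h0, h1⟩
    · obtain ⟨hlt, hu⟩ := (mem_image_val n).1 h1
      exact ⟨_, hu, by rw [SimpleGraph.pathGraph_adj]; right; rfl⟩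
    · obtain ⟨hlt, hu⟩ := (mem_image_val n).1 h1
      refine ⟨_, hu, ?_⟩
      rw [SimpleGraph.pathGraph_adj]
      left
      show (v : ℕ) - 1 + 1 = (v : ℕ)
      omega

lemma iso_iff (S : Finset (Fin n)) :
    IsIsolateDominatingSet (SimpleGraph.pathGraph n) S ↔ isoN n (S.image Fin.val) := by
  unfold IsIsolateDominatingSet isoN
  rw [dom_iff]
  refine and_congr_right fun _ => ?_
  constructor
  · rintro ⟨v, hvS, hiso⟩
    refine ⟨v, mem_image_of_mem _ hvS, ?_, ?_⟩
    · intro hc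
      obtain ⟨hlt, hu⟩ := (mem_image_val n).1 hc
      refine hiso _ hu ?_
      rw [SimpleGraph.pathGraph_adj]
      left
      show (v : ℕ) + 1 = ((⟨(v:ℕ)+1, hlt⟩ : Fin n) : ℕ)
      rfl
    · rcases Nat.eq_zero_or_pos (v : ℕ) with h0 | h0
      · exact Or.inl h0
      · refine Or.inr fun hc => ?_
        obtain ⟨hlt, hu⟩ := (mem_image_val n).1 hc
        refine hiso _ hu ?_
        rw [SimpleGraph.pathGraph_adj]
        right
        show ((⟨(v:ℕ)-1, hlt⟩ : Fin n) : ℕ) + 1 = (v : ℕ)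
        simp only [Fin.val_mk]
        omega
  · rintro ⟨v, hvS, h1, h2⟩
    obtain ⟨hlt, hv⟩ := (mem_image_val n).1 hvS
    refine ⟨⟨v, hlt⟩, hv, fun u huS hadj => ?_⟩
    rw [SimpleGraph.pathGraph_adj] at hadj
    have hval : ((⟨v, hlt⟩ : Fin n) : ℕ) = v := rfl
    rw [hval] at hadj
    have huv : (u : ℕ) ∈ S.image Fin.val := mem_image_of_mem _ huS
    rcases hadj with hh | hh
    · exact h1 (by rw [show v + 1 = (u : ℕ) from hh]; exact huv)
    · rcases h2 with h2 | h2
      · omega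
      · exact h2 (by rw [show v - 1 = (u : ℕ) by omega]; exact huv)

open scoped Classical in
lemma transfer_count (i : ℕ) (P : Finset (Fin n) → Prop) (Q : Finset ℕ → Prop)
    (hPQ : ∀ S : Finset (Fin n), P S ↔ Q (S.image Fin.val)) :
    Set.ncard {S : Finset (Fin n) | P S ∧ S.card = i}
      = ((range n).powerset.filter (fun S => Q S ∧ S.card = i)).card := by
  rw [show {S : Finset (Fin n) | P S ∧ S.card = i}
      = ↑(Finset.univ.filter (fun S : Finset (Fin n) =>
          P S ∧ S.card = i)) by ext S; simp,
    Set.ncard_coe_finset]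
  apply Finset.card_bij' (fun S _ => S.image Fin.val)
    (fun T _ => Finset.univ.filter (fun x : Fin n => (x : ℕ) ∈ T))
  · intro S hS
    simp only [mem_filter, mem_univ, true_and] at hS ⊢
    refine ⟨?_, (hPQ S).1 hS.1, ?_⟩
    · simp only [mem_powerset]; intro v hv
      obtain ⟨h, _⟩ := (mem_image_val n).1 hv
      simpa using h
    · rw [Finset.card_image_of_injective _ Fin.val_injective, hS.2]
  · intro T hT
    simp only [mem_filter, mem_powerset] at hT
    simp only [mem_filter, mem_univ, true_and]
    have himg : (Finset.univ.filter (fun x : Fin n => (x : ℕ) ∈ T)).image Fin.val = T := by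
      ext v
      rw [mem_image_val]
      constructor
      · rintro ⟨h, hv⟩; simpa using hv
      · intro hv
        have : v < n := by simpa using hT.1 hv
        exact ⟨this, by simpa using hv⟩
    have hc : #(Finset.univ.filter (fun x : Fin n => (x : ℕ) ∈ T)) = #T := by
      conv_rhs => rw [← himg]
      rw [Finset.card_image_of_injective _ Fin.val_injective]
    exact ⟨(hPQ _).2 (by rw [himg]; exact hT.2.1), hc.trans hT.2.2⟩
  · intro S hS
    ext x
    simp only [mem_filter, mem_univ, true_and, mem_image]
    exact ⟨fun ⟨a, ha, h⟩ => Fin.val_injective h ▸ ha, fun h => ⟨x, h, rfl⟩⟩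
  · intro T hT
    simp only [mem_filter, mem_powerset] at hT
    ext v
    rw [mem_image_val]
    constructor
    · rintro ⟨h, hv⟩; simpa using hv
    · intro hv
      have : v < n := by simpa using hT.1 hv
      exact ⟨this, by simpa using hv⟩


open scoped Classical in
lemma transfer_dom (i : ℕ) : domCount (SimpleGraph.pathGraph n) i = DN n i :=
  transfer_count n i _ (domN n) (dom_iff n)

open scoped Classical in
lemma transfer_iso (i : ℕ) : isoDomCount (SimpleGraph.pathGraph n) i = NN n i :=
  transfer_count n i _ (isoN n) (iso_iff n)

end transfer

theorem isoDomCount_path_recurrence (n i : ℕ) (hi : 2 ≤ i) (hn : i + 3 ≤ n) :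
    isoDomCount (SimpleGraph.pathGraph n) i =
      domCount (SimpleGraph.pathGraph (n - 2)) (i - 1) +
      domCount (SimpleGraph.pathGraph (n - 3)) (i - 1) +
      (∑ k ∈ Finset.Icc 3 i,
        isoDomCount (SimpleGraph.pathGraph (n - k)) (i + 1 - k)) +
      (∑ k ∈ Finset.Icc 4 (i + 1),
        isoDomCount (SimpleGraph.pathGraph (n - k)) (i + 2 - k)) := by
  rw [transfer_iso, transfer_dom, transfer_dom,
    Finset.sum_congr rfl (fun k _ => transfer_iso (n - k) (i + 1 - k)),
    Finset.sum_congr rfl (fun k _ => transfer_iso (n - k) (i + 2 - k))]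
  exact NN_rec n i hi hn
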